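/- arXiv:2306.17442 — 2 statements merged into one kernel-verified Lean document; each statement's English description precedes it below -/
import Mathlib

section
/- Let φ denote the standard Gaussian density and Φ its cumulative distribution function. For a > 0, consider the ternary quantizer on the standard Gaussian with threshold a and optimal levels: Q(w) = m for w ≥ a, Q(w) = −m for w ≤ −a, Q(w) = 0 for |w| < a, where m = φ(a)/(1 − Φ(a)) is the conditional mean of the Gaussian on [a, ∞). Then the expected squared quantization error E[(Q(w) − w)²] over the standard Gaussian equals 1 − 2φ(a)²/(1 − Φ(a)). -/
open MeasureTheory Set ProbabilityTheory

/-- The standard Gaussian density. -/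
noncomputable def gaussPdf (x : ℝ) : ℝ := (Real.sqrt (2 * Real.pi))⁻¹ * Real.exp (-x ^ 2 / 2)

/-- The standard Gaussian cumulative distribution function. -/
noncomputable def gaussCdf (a : ℝ) : ℝ := ∫ x in Iic a, gaussPdf x

open Real Filter
open scoped ENNReal NNReal

lemma gaussPdf_eq (x : ℝ) : gaussPdf x = gaussianPDFReal 0 1 x := by
  simp [gaussPdf, gaussianPDFReal]

lemma gaussPdf_nonneg (x : ℝ) : 0 ≤ gaussPdf x := by
  unfold gaussPdf; positivity

lemma gaussPdf_pos (x : ℝ) : 0 < gaussPdf x := by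
  have h : 0 < Real.sqrt (2 * Real.pi) := Real.sqrt_pos.2 (by positivity)
  unfold gaussPdf; positivity

lemma gaussPdf_neg (x : ℝ) : gaussPdf (-x) = gaussPdf x := by simp [gaussPdf]

lemma gaussPdf_form (x : ℝ) :
    gaussPdf x = (Real.sqrt (2 * Real.pi))⁻¹ * Real.exp (-(1/2) * x ^ 2) := by
  rw [gaussPdf]; ring_nf

lemma integrable_gaussPdf : Integrable gaussPdf := by
  simp only [funext gaussPdf_form]
  exact (integrable_exp_neg_mul_sq (by norm_num : (0:ℝ) < 1/2)).const_mul _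

lemma integrable_x_gaussPdf : Integrable (fun x => x * gaussPdf x) := by
  have h := (integrable_mul_exp_neg_mul_sq (by norm_num : (0:ℝ) < 1/2)).const_mul
    ((Real.sqrt (2 * Real.pi))⁻¹)
  refine h.congr ?_
  filter_upwards with x
  rw [gaussPdf_form]; ring

lemma integrable_sq_gaussPdf : Integrable (fun x => x ^ 2 * gaussPdf x) := by
  have h := (integrable_rpow_mul_exp_neg_mul_sq (by norm_num : (0:ℝ) < 1/2)
    (by norm_num : (-1:ℝ) < 2)).const_mul ((Real.sqrt (2 * Real.pi))⁻¹)
  refine h.congr ?_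
  filter_upwards with x
  rw [gaussPdf_form, ← Real.rpow_natCast x 2]; push_cast; ring

lemma integral_gaussPdf : ∫ x, gaussPdf x = 1 := by
  simp only [funext gaussPdf_eq]
  exact integral_gaussianPDFReal_eq_one 0 one_ne_zero

lemma hasDerivAt_gaussPdf (x : ℝ) : HasDerivAt gaussPdf (-x * gaussPdf x) x := by
  have h1 : HasDerivAt (fun x : ℝ => -x ^ 2 / 2) (-x) x := by
    have := ((hasDerivAt_pow 2 x).neg).div_const 2
    exact this.congr_deriv (by ring)
  have h2 := (h1.exp).const_mul ((Real.sqrt (2 * Real.pi))⁻¹)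
  exact h2.congr_deriv (by rw [gaussPdf]; ring)

lemma hasDerivAt_neg_gaussPdf (x : ℝ) :
    HasDerivAt (fun x => -gaussPdf x) (x * gaussPdf x) x := by
  exact (hasDerivAt_gaussPdf x).neg.congr_deriv (by ring)

lemma hasDerivAt_F2 (x : ℝ) :
    HasDerivAt (fun x => -(x * gaussPdf x)) ((x ^ 2 - 1) * gaussPdf x) x := by
  have := ((hasDerivAt_id x).mul (hasDerivAt_gaussPdf x)).neg
  simp only [id] at this
  exact this.congr_deriv (by ring)

lemma tendsto_gaussPdf_zero : Tendsto gaussPdf atTop (nhds 0) := by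
  have h : Tendsto (fun x : ℝ => -x ^ 2 / 2) atTop atBot := by
    apply Filter.Tendsto.atBot_div_const (by norm_num)
    exact tendsto_neg_atBot_iff.2 (tendsto_pow_atTop (by norm_num))
  have := (Real.tendsto_exp_atBot.comp h).const_mul ((Real.sqrt (2 * Real.pi))⁻¹)
  simp only [mul_zero] at this
  exact this.congr fun x => rfl

lemma tendsto_x_gaussPdf_zero : Tendsto (fun x => x * gaussPdf x) atTop (nhds 0) := by
  have h := rpow_mul_exp_neg_mul_sq_isLittleO_exp_neg (by norm_num : (0:ℝ) < 1/2) 1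
  have h2 : Tendsto (fun x : ℝ => x * Real.exp (-(1/2) * x ^ 2)) atTop (nhds 0) := by
    have h0 : Tendsto (fun x : ℝ => (1/2 : ℝ) * x) atTop atTop :=
      tendsto_id.const_mul_atTop (by norm_num)
    have h1 : Tendsto (fun x : ℝ => -((1/2 : ℝ) * x)) atTop atBot := tendsto_neg_atBot_iff.2 h0
    have hg : Tendsto (fun x : ℝ => Real.exp (-(1/2) * x)) atTop (nhds 0) :=
      (Real.tendsto_exp_atBot.comp h1).congr fun x => by rw [Function.comp_apply, neg_mul]
    have := h.isBigO.trans_tendsto hg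
    refine this.congr' ?_
    filter_upwards [eventually_ge_atTop (0:ℝ)] with x hx
    rw [Real.rpow_one]
  have := h2.const_mul ((Real.sqrt (2 * Real.pi))⁻¹)
  simp only [mul_zero] at this
  refine this.congr ?_
  intro x; rw [gaussPdf_form]; ring

lemma integral_Ioi_x_gaussPdf (a : ℝ) : ∫ x in Ioi a, x * gaussPdf x = gaussPdf a := by
  have := integral_Ioi_of_hasDerivAt_of_tendsto' (a := a) (m := 0) (f := fun x => -gaussPdf x)
    (f' := fun x => x * gaussPdf x) (fun x _ => hasDerivAt_neg_gaussPdf x)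
    integrable_x_gaussPdf.integrableOn (by simpa using tendsto_gaussPdf_zero.neg)
  simpa using this

lemma integrable_sq_sub_one_gaussPdf : Integrable (fun x => (x ^ 2 - 1) * gaussPdf x) := by
  refine (integrable_sq_gaussPdf.sub integrable_gaussPdf).congr ?_
  filter_upwards with x; simp only [Pi.sub_apply]; ring

lemma integral_Ioi_sq_sub_one (a : ℝ) :
    ∫ x in Ioi a, (x ^ 2 - 1) * gaussPdf x = a * gaussPdf a := by
  have := integral_Ioi_of_hasDerivAt_of_tendsto' (a := a) (m := 0)
    (f := fun x => -(x * gaussPdf x))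
    (f' := fun x => (x ^ 2 - 1) * gaussPdf x) (fun x _ => hasDerivAt_F2 x)
    integrable_sq_sub_one_gaussPdf.integrableOn (by simpa using tendsto_x_gaussPdf_zero.neg)
  simpa using this

lemma integral_Iic_add_Ioi_gaussPdf (a : ℝ) :
    (∫ x in Iic a, gaussPdf x) + ∫ x in Ioi a, gaussPdf x = 1 := by
  rw [intervalIntegral.integral_Iic_add_Ioi integrable_gaussPdf.integrableOn integrable_gaussPdf.integrableOn,
    integral_gaussPdf]

lemma integral_Iic_neg_gaussPdf (a : ℝ) :
    ∫ x in Iic (-a), gaussPdf x = ∫ x in Ioi a, gaussPdf x := by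
  rw [← integral_comp_neg_Ioi a gaussPdf]
  exact setIntegral_congr_fun measurableSet_Ioi fun x _ => gaussPdf_neg x

lemma lower_eq_upper (m a : ℝ) :
    ∫ x in Iic (-a), (-m - x) ^ 2 * gaussPdf x = ∫ x in Ioi a, (m - x) ^ 2 * gaussPdf x := by
  rw [← integral_comp_neg_Ioi a (fun x => (-m - x) ^ 2 * gaussPdf x)]
  refine setIntegral_congr_fun measurableSet_Ioi fun x _ => ?_
  rw [gaussPdf_neg]; ring_nf

lemma upper_integral (m a : ℝ) :
    ∫ x in Ioi a, (m - x) ^ 2 * gaussPdf x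
      = m ^ 2 * (∫ x in Ioi a, gaussPdf x) - 2 * m * gaussPdf a
        + ((∫ x in Ioi a, gaussPdf x) + a * gaussPdf a) := by
  have e : ∀ x ∈ Ioi a, (m - x) ^ 2 * gaussPdf x
      = (m ^ 2 * gaussPdf x - (2 * m) * (x * gaussPdf x))
        + ((x ^ 2 - 1) * gaussPdf x + gaussPdf x) := fun x _ => by ring
  have hA : IntegrableOn (fun x => m ^ 2 * gaussPdf x - (2 * m) * (x * gaussPdf x)) (Ioi a) :=
    (integrable_gaussPdf.const_mul _).integrableOn.sub
      (integrable_x_gaussPdf.const_mul _).integrableOn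
  have hB : IntegrableOn (fun x => (x ^ 2 - 1) * gaussPdf x + gaussPdf x) (Ioi a) :=
    integrable_sq_sub_one_gaussPdf.integrableOn.add integrable_gaussPdf.integrableOn
  rw [setIntegral_congr_fun measurableSet_Ioi e, integral_add hA hB,
    integral_sub (integrable_gaussPdf.const_mul _).integrableOn
      (integrable_x_gaussPdf.const_mul _).integrableOn,
    integral_add integrable_sq_sub_one_gaussPdf.integrableOn integrable_gaussPdf.integrableOn,
    integral_const_mul, integral_const_mul, integral_Ioi_x_gaussPdf, integral_Ioi_sq_sub_one]
  ring

lemma middle_sq_sub_one (a : ℝ) (ha : 0 < a) :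
    ∫ x in Ioo (-a) a, (x ^ 2 - 1) * gaussPdf x = -(2 * a * gaussPdf a) := by
  rw [← integral_Ioc_eq_integral_Ioo, ← intervalIntegral.integral_of_le (by linarith : -a ≤ a)]
  rw [intervalIntegral.integral_eq_sub_of_hasDerivAt (fun x _ => hasDerivAt_F2 x)
    integrable_sq_sub_one_gaussPdf.intervalIntegrable]
  rw [gaussPdf_neg]; ring

lemma middle_gaussPdf (a : ℝ) (ha : 0 < a) :
    ∫ x in Ioo (-a) a, gaussPdf x = 1 - 2 * ∫ x in Ioi a, gaussPdf x := by
  have h1 : ∫ x in Ioi (-a), gaussPdf x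
      = (∫ x in Ioc (-a) a, gaussPdf x) + ∫ x in Ioi a, gaussPdf x := by
    rw [← setIntegral_union (Ioc_disjoint_Ioi le_rfl) measurableSet_Ioi
      integrable_gaussPdf.integrableOn integrable_gaussPdf.integrableOn,
      Ioc_union_Ioi_eq_Ioi (by linarith : -a ≤ a)]
  have h2 := integral_Iic_add_Ioi_gaussPdf (-a)
  have h3 := integral_Iic_neg_gaussPdf a
  rw [integral_Ioc_eq_integral_Ioo] at h1
  linarith

lemma split3 {f : ℝ → ℝ} {a : ℝ} (ha : 0 < a) (h1 : IntegrableOn f (Iic (-a)))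
    (h2 : IntegrableOn f (Ioo (-a) a)) (h3 : IntegrableOn f (Ici a)) :
    ∫ x, f x = (∫ x in Iic (-a), f x) + (∫ x in Ioo (-a) a, f x) + ∫ x in Ici a, f x := by
  have hset : Iic (-a) ∪ Ioo (-a) a = Iio a := by
    ext x; simp only [mem_union, mem_Iic, mem_Ioo, mem_Iio]
    constructor
    · rintro (h | ⟨_, h⟩) <;> linarith
    · intro h; by_cases hx : x ≤ -a
      · exact Or.inl hx
      · exact Or.inr ⟨by linarith, h⟩
  have hdisj : Disjoint (Iic (-a)) (Ioo (-a) a) := by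
    rw [Set.disjoint_left]
    intro x hx hx'
    have := mem_Iic.mp hx
    have := (mem_Ioo.mp hx').1
    linarith
  rw [← intervalIntegral.integral_Iio_add_Ici (by rw [← hset]; exact h1.union h2) h3]
  congr 1
  rw [← hset, setIntegral_union hdisj measurableSet_Ioo h1 h2]

lemma integrable_quad (c : ℝ) : Integrable (fun x => (c - x) ^ 2 * gaussPdf x) := by
  have h := ((integrable_gaussPdf.const_mul (c ^ 2)).sub
    (integrable_x_gaussPdf.const_mul (2 * c))).add integrable_sq_gaussPdf
  refine h.congr ?_
  filter_upwards with x
  simp only [Pi.add_apply, Pi.sub_apply]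
  ring

lemma T_pos (a : ℝ) : 0 < ∫ x in Ioi a, gaussPdf x := by
  refine (setIntegral_pos_iff_support_of_nonneg_ae
    (ae_of_all _ gaussPdf_nonneg) integrable_gaussPdf.integrableOn).2 ?_
  have hsub : Ioi a ⊆ Function.support gaussPdf := fun x _ => (gaussPdf_pos x).ne'
  rw [inter_eq_self_of_subset_right hsub, Real.volume_Ioi]
  exact ENNReal.zero_lt_top

/-- Expected squared error of the optimal symmetric ternary quantizer with
threshold `a` under the standard Gaussian prior: it equals `1 - 2φ(a)²/(1 - Φ(a))`. -/
theorem stmt_6 (a : ℝ) (ha : 0 < a)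
    (m : ℝ) (hm : m = gaussPdf a / (1 - gaussCdf a))
    (Q : ℝ → ℝ)
    (hQ : ∀ w : ℝ, Q w = if a ≤ w then m else if w ≤ -a then -m else 0) :
    (∫ w, (Q w - w) ^ 2 ∂(gaussianReal 0 1))
      = 1 - 2 * gaussPdf a ^ 2 / (1 - gaussCdf a) := by
  set T := ∫ x in Ioi a, gaussPdf x with hTdef
  have hT : 1 - gaussCdf a = T := by
    have := integral_Iic_add_Ioi_gaussPdf a
    rw [gaussCdf]; linarith
  have hTpos : 0 < T := T_pos a
  have hm' : m = gaussPdf a / T := by rw [hm, hT]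
  -- convert the gaussian integral to a Lebesgue-weighted integral
  have hconv : (∫ w, (Q w - w) ^ 2 ∂(gaussianReal 0 1))
      = ∫ w, gaussPdf w * (Q w - w) ^ 2 := by
    rw [gaussianReal_of_var_ne_zero 0 one_ne_zero]
    have hmeas : Measurable (fun x => (gaussianPDFReal 0 1 x).toNNReal) :=
      (measurable_gaussianPDFReal 0 1).real_toNNReal
    rw [show gaussianPDF 0 1 = (fun x => ((gaussianPDFReal 0 1 x).toNNReal : ℝ≥0∞)) from rfl,
      integral_withDensity_eq_integral_smul hmeas]
    congr 1
    funext x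
    rw [NNReal.smul_def, Real.coe_toNNReal _ (gaussianPDFReal_nonneg 0 1 x), ← gaussPdf_eq,
      smul_eq_mul]
  rw [hconv]
  -- integrability on the three pieces
  have hI3 : IntegrableOn (fun w => gaussPdf w * (Q w - w) ^ 2) (Ici a) := by
    refine ((integrable_quad m).integrableOn).congr_fun (fun x hx => ?_) measurableSet_Ici
    rw [hQ x, if_pos (mem_Ici.mp hx)]; ring
  have hI1 : IntegrableOn (fun w => gaussPdf w * (Q w - w) ^ 2) (Iic (-a)) := by
    refine ((integrable_quad (-m)).integrableOn).congr_fun (fun x hx => ?_) measurableSet_Iic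
    have hx' := mem_Iic.mp hx
    rw [hQ x, if_neg (by linarith), if_pos hx']; ring
  have hI2 : IntegrableOn (fun w => gaussPdf w * (Q w - w) ^ 2) (Ioo (-a) a) := by
    refine ((integrable_sq_gaussPdf).integrableOn).congr_fun (fun x hx => ?_) measurableSet_Ioo
    obtain ⟨h1, h2⟩ := mem_Ioo.mp hx
    rw [hQ x, if_neg (by linarith), if_neg (by linarith)]; ring
  rw [split3 ha hI1 hI2 hI3]
  -- piece values
  have e3 : ∫ x in Ici a, gaussPdf x * (Q x - x) ^ 2
      = m ^ 2 * T - 2 * m * gaussPdf a + (T + a * gaussPdf a) := by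
    rw [setIntegral_congr_fun measurableSet_Ici
      (fun x hx => by
        show gaussPdf x * (Q x - x) ^ 2 = _
        rw [hQ x, if_pos (mem_Ici.mp hx)]; ring :
        EqOn (fun w => gaussPdf w * (Q w - w) ^ 2) (fun x => (m - x) ^ 2 * gaussPdf x) (Ici a)),
      integral_Ici_eq_integral_Ioi, upper_integral]
  have e1 : ∫ x in Iic (-a), gaussPdf x * (Q x - x) ^ 2
      = m ^ 2 * T - 2 * m * gaussPdf a + (T + a * gaussPdf a) := by
    rw [setIntegral_congr_fun measurableSet_Iic
      (fun x hx => by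
        show gaussPdf x * (Q x - x) ^ 2 = _
        have hx' := mem_Iic.mp hx
        rw [hQ x, if_neg (by linarith), if_pos hx']; ring :
        EqOn (fun w => gaussPdf w * (Q w - w) ^ 2) (fun x => (-m - x) ^ 2 * gaussPdf x)
          (Iic (-a))),
      lower_eq_upper, upper_integral]
  have e2 : ∫ x in Ioo (-a) a, gaussPdf x * (Q x - x) ^ 2
      = -(2 * a * gaussPdf a) + (1 - 2 * T) := by
    rw [setIntegral_congr_fun measurableSet_Ioo
      (fun x hx => by
        show gaussPdf x * (Q x - x) ^ 2 = _
        obtain ⟨h1, h2⟩ := mem_Ioo.mp hx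
        rw [hQ x, if_neg (by linarith), if_neg (by linarith)]; ring :
        EqOn (fun w => gaussPdf w * (Q w - w) ^ 2)
          (fun x => (x ^ 2 - 1) * gaussPdf x + gaussPdf x) (Ioo (-a) a)),
      integral_add integrable_sq_sub_one_gaussPdf.integrableOn integrable_gaussPdf.integrableOn,
      middle_sq_sub_one a ha, middle_gaussPdf a ha]
  rw [e1, e2, e3, hm', hT]
  field_simp
  ring
end

section
/- Let λ > 0. For every function g : [−λ, λ] → ℝ whose range contains at most 3 values, there exists w ∈ [−λ, λ] with |w − g(w)| ≥ λ/3. Consequently, the TQuant quantizer, whose reconstruction levels are −2λ/3, 0, 2λ/3 with thresholds ±λ/3, achieves the minimal possible worst-case error λ/3 among all ternary (three-level) quantizers on [−λ, λ]. -/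
open Set

/-- Any three-level quantizer of `[-λ, λ]` has worst-case error at least `λ/3`;
the TQuant quantizer (levels `-2λ/3, 0, 2λ/3`, thresholds `±λ/3`) attains this bound,
hence achieves the minimal possible worst-case error among ternary quantizers. -/
theorem stmt_11 (lam : ℝ) (hlam : 0 < lam) :
    (∀ g : ℝ → ℝ, (∃ S : Finset ℝ, S.card ≤ 3 ∧ ∀ w ∈ Icc (-lam) lam, g w ∈ S) →
      ∃ w ∈ Icc (-lam) lam, lam / 3 ≤ |w - g w|) ∧
    (∀ w ∈ Icc (-lam) lam,
      |w - (if w < -lam / 3 then -(2 * lam / 3)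
        else if w ≤ lam / 3 then 0 else 2 * lam / 3)| ≤ lam / 3) := by
  constructor
  · rintro g ⟨S, hS, hmem⟩
    by_contra hcon
    push_neg at hcon
    have key : ∀ w ∈ Icc (-lam) lam, w - lam / 3 < g w ∧ g w < w + lam / 3 := by
      intro w hw
      have := hcon w hw
      rw [abs_lt] at this
      constructor <;> linarith [this.1, this.2]
    have m0 : (-lam) ∈ Icc (-lam) lam := by constructor <;> linarith
    have m1 : (-lam/3) ∈ Icc (-lam) lam := by constructor <;> linarith
    have m2 : (lam/3) ∈ Icc (-lam) lam := by constructor <;> linarith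
    have m3 : lam ∈ Icc (-lam) lam := by constructor <;> linarith
    have k0 := key _ m0
    have k1 := key _ m1
    have k2 := key _ m2
    have k3 := key _ m3
    have h01 : g (-lam) < g (-lam/3) := by linarith [k0.2, k1.1]
    have h12 : g (-lam/3) < g (lam/3) := by linarith [k1.2, k2.1]
    have h23 : g (lam/3) < g lam := by linarith [k2.2, k3.1]
    have hsub : ({g (-lam), g (-lam/3), g (lam/3), g lam} : Finset ℝ) ⊆ S := by
      intro x hx
      simp only [Finset.mem_insert, Finset.mem_singleton] at hx
      rcases hx with h | h | h | h <;> subst h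
      · exact hmem _ m0
      · exact hmem _ m1
      · exact hmem _ m2
      · exact hmem _ m3
    have hcard : ({g (-lam), g (-lam/3), g (lam/3), g lam} : Finset ℝ).card = 4 := by
      rw [Finset.card_insert_of_notMem (by simp; refine ⟨?_, ?_, ?_⟩ <;> intro h <;> nlinarith),
        Finset.card_insert_of_notMem (by simp; refine ⟨?_, ?_⟩ <;> intro h <;> nlinarith),
        Finset.card_insert_of_notMem (by simp; intro h; nlinarith),
        Finset.card_singleton]
    have := Finset.card_le_card hsub
    omega
  · intro w hw
    obtain ⟨h1, h2⟩ := hw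
    split_ifs with ha hb <;> rw [abs_le] <;> constructor <;> (try push_neg at *) <;> linarith
end
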